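/- Let (Z,d,μ) be a separable locally compact metric measure space and Q ≥ 1. The family P_t of nonconstant paths in P = C([0,1],Z) which are not thick has zero Q-modulus. In particular, for any family Γ ⊆ P of nonconstant paths, Mod_Q(Γ ∩ P_T) = Mod_Q(Γ), where P_T is the set of thick paths. -/

import Mathlib

open Metric Set MeasureTheory Filter Topology unitInterval
open scoped NNReal ENNReal

noncomputable section

/-- The length (total variation) of a continuous path. -/
def pathLength {Z : Type*} [MetricSpace Z] (γ : C(unitInterval, Z)) : ℝ≥0∞ :=
  eVariationOn γ Set.univ

/-- The (real-valued) arclength function of a path. -/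
def pathVar {Z : Type*} [MetricSpace Z] (γ : C(unitInterval, Z)) (t : ℝ) : ℝ :=
  (eVariationOn γ {s : unitInterval | (s : ℝ) ≤ t}).toReal

/-- The arclength (Stieltjes) measure on the parameter interval associated to a path. -/
def lengthMeasure {Z : Type*} [MetricSpace Z] (γ : C(unitInterval, Z)) :
    MeasureTheory.Measure ℝ :=
  letI := Classical.propDecidable (Monotone (pathVar γ))
  if h : Monotone (pathVar γ) then h.stieltjesFunction.measure else 0

/-- The line integral `∫_γ ρ ds` of a density `ρ` along a path `γ` (with respect to
arclength). -/
def pathIntegral {Z : Type*} [MetricSpace Z] (ρ : Z → ℝ≥0∞) (γ : C(unitInterval, Z)) : ℝ≥0∞ :=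
  ∫⁻ t, ρ (γ (Set.projIcc 0 1 zero_le_one t)) ∂(lengthMeasure γ)

/-- A density is admissible for a path family if every rectifiable path in the family has
`ρ`-length at least one. -/
def Admissible {Z : Type*} [MetricSpace Z] (ρ : Z → ℝ≥0∞) (Γ : Set C(unitInterval, Z)) : Prop :=
  ∀ γ ∈ Γ, pathLength γ < ⊤ → 1 ≤ pathIntegral ρ γ

/-- The `Q`-modulus of a family of paths in `Z`. -/
def modulus {Z : Type*} [MetricSpace Z] [MeasurableSpace Z] (Q : ℝ) (μ : Measure Z)
    (Γ : Set C(unitInterval, Z)) : ℝ≥0∞ :=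
  ⨅ (ρ : Z → ℝ≥0∞) (_ : Measurable ρ) (_ : Admissible ρ Γ), ∫⁻ z, ρ z ^ Q ∂μ

/-- A path is nonconstant if it takes at least two values. -/
def Nonconstant {Z : Type*} [MetricSpace Z] (γ : C(unitInterval, Z)) : Prop :=
  ∃ s t, γ s ≠ γ t

/-- A measure `μ` on a metric space is Ahlfors `Q`-regular. -/
def AhlforsRegular {Z : Type*} [MetricSpace Z] [MeasurableSpace Z] (μ : Measure Z)
    (Q : ℝ) : Prop :=
  ∃ C : ℝ≥0, 1 ≤ C ∧ ∀ (a : Z) (R : ℝ), 0 < R →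
    ENNReal.ofReal R ≤ EMetric.diam (Set.univ : Set Z) →
      ENNReal.ofReal (R ^ Q) / C ≤ μ (Metric.ball a R) ∧
      μ (Metric.ball a R) ≤ C * ENNReal.ofReal (R ^ Q)

/-- The metric cross-ratio of a four-tuple of points. -/
def crossRatio {Z : Type*} [MetricSpace Z] (z₁ z₂ z₃ z₄ : Z) : ℝ≥0 :=
  (nndist z₁ z₃ * nndist z₂ z₄) / (nndist z₁ z₄ * nndist z₂ z₃)

/-- A map is `η`-quasi-Möbius if it distorts cross-ratios of distinct four-tuples in a way
controlled by the homeomorphism `η : [0,∞) → [0,∞)`. -/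
def IsQuasiMobius {X Y : Type*} [MetricSpace X] [MetricSpace Y] (η : ℝ≥0 ≃ₜ ℝ≥0)
    (f : X → Y) : Prop :=
  ∀ x₁ x₂ x₃ x₄ : X, x₁ ≠ x₂ → x₁ ≠ x₃ → x₁ ≠ x₄ → x₂ ≠ x₃ → x₂ ≠ x₄ → x₃ ≠ x₄ →
    crossRatio (f x₁) (f x₂) (f x₃) (f x₄) ≤ η (crossRatio x₁ x₂ x₃ x₄)

/-- A map is `η`-quasisymmetric. -/
def IsQuasisymmetric {X Y : Type*} [MetricSpace X] [MetricSpace Y] (η : ℝ≥0 ≃ₜ ℝ≥0)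
    (f : X → Y) : Prop :=
  ∀ x₁ x₂ x₃ : X, x₁ ≠ x₂ → x₁ ≠ x₃ → x₂ ≠ x₃ →
    nndist (f x₁) (f x₂) / nndist (f x₁) (f x₃) ≤ η (nndist x₁ x₂ / nndist x₁ x₃)

/-- A metric space is Ahlfors `Q`-regular (with respect to `Q`-dimensional Hausdorff
measure). -/
def AhlforsRegularSpace (Y : Type*) [MetricSpace Y] (Q : ℝ) : Prop :=
  letI : MeasurableSpace Y := borel Y
  haveI : BorelSpace Y := ⟨rfl⟩
  AhlforsRegular (μH[Q] : Measure Y) Q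

/-- The Ahlfors regular conformal dimension of a metric space: the infimum of the Hausdorff
dimensions of all Ahlfors regular metric spaces quasisymmetrically homeomorphic to it. -/
def arConfDim (Z : Type u) [MetricSpace Z] : ℝ≥0∞ :=
  sInf { D : ℝ≥0∞ | ∃ (Y : Type u) (_ : MetricSpace Y) (Q' : ℝ) (η : ℝ≥0 ≃ₜ ℝ≥0) (f : Z ≃ₜ Y),
      AhlforsRegularSpace Y Q' ∧ IsQuasisymmetric η f ∧ D = dimH (Set.univ : Set Y) }

/-- The distance between two subsets of a metric space, as an extended real. -/
def setSep {Z : Type*} [MetricSpace Z] (E F : Set Z) : ℝ≥0∞ :=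
  ⨅ (x ∈ E) (y ∈ F), edist x y

/-- The relative distance `Δ(E,F) = dist(E,F)/min(diam E, diam F)` of two sets. -/
def relDist {Z : Type*} [MetricSpace Z] (E F : Set Z) : ℝ≥0∞ :=
  setSep E F / min (EMetric.diam E) (EMetric.diam F)

/-- The family of paths joining `E` to `F`. -/
def joinPaths {Z : Type*} [MetricSpace Z] (E F : Set Z) : Set C(unitInterval, Z) :=
  {γ | γ 0 ∈ E ∧ γ 1 ∈ F}

/-- A metric measure space is `Q`-Loewner if it is connected and the `Q`-modulus of the family
of paths joining two disjoint nondegenerate continua is bounded below by a positive decreasing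
function of their relative distance. -/
def IsLoewner (Z : Type*) [MetricSpace Z] [MeasurableSpace Z] (Q : ℝ) (μ : Measure Z) : Prop :=
  ConnectedSpace Z ∧
  ∃ Ψ : ℝ≥0∞ → ℝ≥0∞, Antitone Ψ ∧ (∀ t, t ≠ 0 → t ≠ ⊤ → 0 < Ψ t) ∧
    ∀ E F : Set Z, IsCompact E → IsConnected E → E.Nontrivial →
      IsCompact F → IsConnected F → F.Nontrivial → Disjoint E F →
      Ψ (relDist E F) ≤ modulus Q μ (joinPaths E F)

/-- A path is thick if every neighborhood of it in `C([0,1],Z)` contains a family of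
nonconstant paths of positive `Q`-modulus. -/
def IsThick {Z : Type*} [MetricSpace Z] [MeasurableSpace Z] (Q : ℝ) (μ : Measure Z)
    (γ : C(unitInterval, Z)) : Prop :=
  ∀ ε : ℝ, 0 < ε → 0 < modulus Q μ {α | α ∈ Metric.ball γ ε ∧ Nonconstant α}

end

section Aux

variable {Z : Type*} [MetricSpace Z] [MeasurableSpace Z] {Q : ℝ} (μ : MeasureTheory.Measure Z)

lemma admissible_mono {ρ ρ' : Z → ℝ≥0∞} (hle : ∀ z, ρ z ≤ ρ' z)
    {Γ : Set C(unitInterval, Z)} (h : Admissible ρ Γ) : Admissible ρ' Γ := by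
  intro γ hγ hfin
  refine le_trans (h γ hγ hfin) ?_
  exact MeasureTheory.lintegral_mono fun t => hle _

lemma modulus_mono {Γ Γ' : Set C(unitInterval, Z)} (h : Γ ⊆ Γ') :
    modulus Q μ Γ ≤ modulus Q μ Γ' := by
  refine le_iInf fun ρ => le_iInf fun hm => le_iInf fun ha => ?_
  exact iInf₂_le_of_le ρ hm (iInf_le_of_le (fun γ hγ => ha γ (h hγ)) le_rfl)

lemma modulus_le_of_admissible {Γ : Set C(unitInterval, Z)} {ρ : Z → ℝ≥0∞}
    (hm : Measurable ρ) (ha : Admissible ρ Γ) :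
    modulus Q μ Γ ≤ ∫⁻ z, ρ z ^ Q ∂μ :=
  iInf₂_le_of_le ρ hm (iInf_le_of_le ha le_rfl)

lemma modulus_union_iUnion_zero (hQ : 1 ≤ Q) {ι : Type*} [Countable ι]
    (A : Set C(unitInterval, Z)) (G : ι → Set C(unitInterval, Z))
    (h0 : ∀ i, modulus Q μ (G i) = 0) :
    modulus Q μ (A ∪ ⋃ i, G i) ≤ modulus Q μ A := by
  have hQ0 : (0:ℝ) < Q := lt_of_lt_of_le one_pos hQ
  rcases eq_top_or_lt_top (modulus Q μ A) with htop | hlt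
  · rw [htop]; exact le_top
  refine ENNReal.le_of_forall_pos_le_add fun ε hε hA => ?_
  have hε' : (ε : ℝ≥0∞) ≠ 0 := by
    simpa using (ENNReal.coe_pos.2 hε).ne'
  -- choose a nearly optimal admissible density for `A`
  have h1 : modulus Q μ A < modulus Q μ A + ε / 2 := by
    refine ENNReal.lt_add_right hlt.ne ?_
    simp [hε']
  rw [modulus] at h1
  rw [iInf_lt_iff] at h1
  obtain ⟨ρ₀, h1⟩ := h1
  rw [iInf_lt_iff] at h1
  obtain ⟨hρ₀m, h1⟩ := h1
  rw [iInf_lt_iff] at h1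
  obtain ⟨hρ₀a, hρ₀⟩ := h1
  -- choose small admissible densities for the `G i`
  obtain ⟨δ, hδpos, hδsum⟩ := ENNReal.exists_pos_sum_of_countable' (by simpa using hε'.lt_of_le' (by positivity) |>.ne' : (ε/2 : ℝ≥0∞) ≠ 0) ι
  have hch : ∀ i, ∃ ρ : Z → ℝ≥0∞, Measurable ρ ∧ Admissible ρ (G i) ∧
      ∫⁻ z, ρ z ^ Q ∂μ < δ i := by
    intro i
    have : modulus Q μ (G i) < δ i := by rw [h0 i]; exact hδpos i
    rw [modulus, iInf_lt_iff] at this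
    obtain ⟨ρ, this⟩ := this
    rw [iInf_lt_iff] at this
    obtain ⟨hm, this⟩ := this
    rw [iInf_lt_iff] at this
    obtain ⟨ha, hlt'⟩ := this
    exact ⟨ρ, hm, ha, hlt'⟩
  choose ρn hρnm hρna hρnlt using hch
  -- the combined density
  set g : Z → ℝ≥0∞ := fun z => ρ₀ z ^ Q + ∑' i, ρn i z ^ Q with hg
  set ρ : Z → ℝ≥0∞ := fun z => g z ^ (1/Q) with hρ
  have hgm : Measurable g := by
    exact (hρ₀m.pow_const Q).add (Measurable.ennreal_tsum fun i => (hρnm i).pow_const Q)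
  have hρm : Measurable ρ := hgm.pow_const _
  have hρQ : ∀ z, ρ z ^ Q = g z := by
    intro z
    rw [hρ, ← ENNReal.rpow_mul, one_div, inv_mul_cancel₀ hQ0.ne', ENNReal.rpow_one]
  have hle0 : ∀ z, ρ₀ z ≤ ρ z := by
    intro z
    have : ρ₀ z = (ρ₀ z ^ Q) ^ (1/Q) := by
      rw [← ENNReal.rpow_mul, mul_one_div_cancel hQ0.ne', ENNReal.rpow_one]
    rw [this, hρ]
    exact ENNReal.rpow_le_rpow (le_add_right le_rfl) (by positivity)
  have hlen : ∀ i z, ρn i z ≤ ρ z := by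
    intro i z
    have : ρn i z = (ρn i z ^ Q) ^ (1/Q) := by
      rw [← ENNReal.rpow_mul, mul_one_div_cancel hQ0.ne', ENNReal.rpow_one]
    rw [this, hρ]
    refine ENNReal.rpow_le_rpow ?_ (by positivity)
    exact le_add_left (ENNReal.le_tsum i)
  have hadm : Admissible ρ (A ∪ ⋃ i, G i) := by
    intro γ hγ hfin
    rcases hγ with hγ | hγ
    · exact le_trans (hρ₀a γ hγ hfin) (MeasureTheory.lintegral_mono fun t => hle0 _)
    · obtain ⟨i, hi⟩ := Set.mem_iUnion.1 hγ
      exact le_trans (hρna i γ hi hfin) (MeasureTheory.lintegral_mono fun t => hlen i _)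
  refine le_trans (modulus_le_of_admissible μ hρm hadm) ?_
  calc ∫⁻ z, ρ z ^ Q ∂μ = ∫⁻ z, g z ∂μ := by
        exact MeasureTheory.lintegral_congr fun z => hρQ z
    _ = (∫⁻ z, ρ₀ z ^ Q ∂μ) + ∫⁻ z, ∑' i, ρn i z ^ Q ∂μ := by
        exact MeasureTheory.lintegral_add_left (hρ₀m.pow_const Q) _
    _ = (∫⁻ z, ρ₀ z ^ Q ∂μ) + ∑' i, ∫⁻ z, ρn i z ^ Q ∂μ := by
        rw [MeasureTheory.lintegral_tsum fun i => ((hρnm i).pow_const Q).aemeasurable]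
    _ ≤ (modulus Q μ A + ε/2) + ε/2 := by
        refine add_le_add hρ₀.le ?_
        refine le_trans (ENNReal.tsum_le_tsum fun i => (hρnlt i).le) hδsum.le
    _ = modulus Q μ A + ε := by rw [add_assoc, ENNReal.add_halves]

lemma modulus_empty (hQ : 1 ≤ Q) : modulus Q μ (∅ : Set C(unitInterval, Z)) = 0 := by
  refine le_antisymm ?_ (zero_le)
  refine le_trans (modulus_le_of_admissible μ measurable_const
    (fun γ hγ _ => absurd hγ (Set.notMem_empty γ)) (ρ := fun _ => 0)) ?_
  simp [ENNReal.zero_rpow_of_pos (lt_of_lt_of_le one_pos hQ)]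

end Aux

theorem modulus_nonthick_zero
    {Z : Type*} [MetricSpace Z] [LocallyCompactSpace Z] [TopologicalSpace.SeparableSpace Z]
    [MeasurableSpace Z] [BorelSpace Z]
    (μ : Measure Z) [IsLocallyFiniteMeasure μ]
    (hsupp : ∀ (z : Z) (r : ℝ), 0 < r → 0 < μ (Metric.ball z r))
    {Q : ℝ} (hQ : 1 ≤ Q)
    : modulus Q μ {γ : C(unitInterval, Z) | Nonconstant γ ∧ ¬ IsThick Q μ γ} = 0 ∧
      ∀ Γ : Set C(unitInterval, Z), (∀ γ ∈ Γ, Nonconstant γ) →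
        modulus Q μ {γ ∈ Γ | IsThick Q μ γ} = modulus Q μ Γ := by
  haveI : SecondCountableTopology Z := UniformSpace.secondCountable_of_separable Z
  set P0 : Set C(unitInterval, Z) := {γ | Nonconstant γ ∧ ¬ IsThick Q μ γ} with hP0
  have hch : ∀ γ : C(unitInterval, Z), γ ∈ P0 →
      ∃ ε : ℝ, 0 < ε ∧ modulus Q μ {α | α ∈ Metric.ball γ ε ∧ Nonconstant α} = 0 := by
    intro γ hγ
    obtain ⟨hnc, hnt⟩ := hγ
    rw [IsThick] at hnt
    push_neg at hnt
    obtain ⟨ε, hε, h⟩ := hnt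
    exact ⟨ε, hε, le_antisymm h (zero_le)⟩
  choose! ε hεpos hεmod using hch
  have key : modulus Q μ P0 = 0 := by
    obtain ⟨T, hTc, hTU⟩ := TopologicalSpace.isOpen_iUnion_countable
      (fun i : P0 => Metric.ball (i : C(unitInterval, Z)) (ε i))
      (fun i => Metric.isOpen_ball)
    haveI := hTc.to_subtype
    set G : T → Set C(unitInterval, Z) :=
      fun i => {α | α ∈ Metric.ball ((i : P0) : C(unitInterval, Z)) (ε (i : P0)) ∧
        Nonconstant α} with hG
    have h0 : ∀ i : T, modulus Q μ (G i) = 0 := fun i => hεmod _ (i : P0).2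
    have hcover : P0 ⊆ ⋃ i, G i := by
      intro α hα
      have h1 : α ∈ ⋃ i : P0, Metric.ball (i : C(unitInterval, Z)) (ε i) :=
        Set.mem_iUnion.2 ⟨⟨α, hα⟩, Metric.mem_ball_self (hεpos α hα)⟩
      rw [← hTU] at h1
      obtain ⟨i, hiT, hmem⟩ := Set.mem_iUnion₂.1 h1
      exact Set.mem_iUnion.2 ⟨⟨i, hiT⟩, hmem, hα.1⟩
    refine le_antisymm ?_ (zero_le)
    calc modulus Q μ P0 ≤ modulus Q μ (∅ ∪ ⋃ i, G i) :=
          modulus_mono μ (by simpa using hcover)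
      _ ≤ modulus Q μ ∅ := modulus_union_iUnion_zero μ hQ _ _ h0
      _ = 0 := modulus_empty μ hQ
  refine ⟨key, fun Γ hΓ => ?_⟩
  refine le_antisymm (modulus_mono μ (Set.sep_subset _ _)) ?_
  have hsub : Γ ⊆ {γ ∈ Γ | IsThick Q μ γ} ∪ ⋃ _ : Unit, P0 := by
    intro γ hγ
    by_cases h : IsThick Q μ γ
    · exact Or.inl ⟨hγ, h⟩
    · exact Or.inr (Set.mem_iUnion.2 ⟨(), hΓ γ hγ, h⟩)
  exact le_trans (modulus_mono μ hsub)
    (modulus_union_iUnion_zero μ hQ _ (fun _ : Unit => P0) (fun _ => key))
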